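/- For all s ∈ [0,1), the generating function of η satisfies Σ_{x≥0} η(x) s^x = 1 − ψ(s)/(α μ(0)(1 − s)); in particular Σ_{x≥0} η(x) s^x < 1 for all s ∈ [0, s_0). -/
import Mathlib


open Set Filter Topology

theorem stmt_2 (α p : ℝ) (μ : ℕ → ℝ) (ψ : ℝ → ℝ) (s₀ : ℝ)
    (hα : 0 < α) (hp : 0 ≤ p)
    (hμ_nonneg : ∀ j, 0 ≤ μ j) (hμ_sum : ∑' j, μ j = 1)
    (hμ0 : 0 < μ 0) (hμ1 : μ 1 = 0)
    (hψ : ∀ s : ℝ, ψ s = α * ((∑' j, μ j * s ^ j) - s) - p * s)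
    (hs₀ : s₀ = sInf {s : ℝ | 0 < s ∧ ψ s = 0})
    (hs₀_mem : s₀ ∈ Ioc (0:ℝ) 1)
    (hψ_pos : ∀ s ∈ Ico (0:ℝ) s₀, 0 < ψ s)
    (μbar : ℕ → ℝ)
    (hμbar : ∀ k, μbar k = 1 - ∑ j ∈ Finset.range (k+1), μ j)
    (η : ℕ → ℝ)
    (hη0 : η 0 = 0)
    (hη : ∀ x, 1 ≤ x → η x = (1 / μ 0) * (μbar x + p / α)) :
    (∀ s ∈ Ico (0:ℝ) 1, ∑' x, η x * s ^ x = 1 - ψ s / (α * μ 0 * (1 - s))) ∧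
      (∀ s ∈ Ico (0:ℝ) s₀, ∑' x, η x * s ^ x < 1) := by
  have hμsummable : Summable μ := by
    by_contra h
    rw [tsum_eq_zero_of_not_summable h] at hμ_sum
    norm_num at hμ_sum
  have hμ_le_one : ∀ j, μ j ≤ 1 := by
    intro j
    rw [← hμ_sum]
    exact Summable.le_tsum hμsummable j (fun i _ => hμ_nonneg i)
  have hμbar_nonneg : ∀ k, 0 ≤ μbar k := by
    intro k
    rw [hμbar k, sub_nonneg, ← hμ_sum]
    exact Summable.sum_le_tsum _ (fun i _ => hμ_nonneg i) hμsummable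
  have hμbar_le_one : ∀ k, μbar k ≤ 1 := by
    intro k
    rw [hμbar k]
    have : 0 ≤ ∑ j ∈ Finset.range (k+1), μ j := Finset.sum_nonneg fun i _ => hμ_nonneg i
    linarith
  have hμbar_succ : ∀ k, μbar (k+1) = μbar k - μ (k+1) := by
    intro k
    rw [hμbar k, hμbar (k+1), Finset.sum_range_succ]
    ring
  -- main: part 1 for each s ∈ [0,1)
  have main : ∀ s : ℝ, 0 ≤ s → s < 1 →
      ∑' x, η x * s ^ x = 1 - ψ s / (α * μ 0 * (1 - s)) := by
    intro s hs0 hs1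
    have hsum_geo : Summable (fun x : ℕ => s ^ x) :=
      summable_geometric_of_lt_one hs0 hs1
    have hsp : ∀ x : ℕ, (0:ℝ) ≤ s ^ x := fun x => pow_nonneg hs0 x
    have hsum_μ : Summable (fun j => μ j * s ^ j) := by
      apply Summable.of_nonneg_of_le (fun j => mul_nonneg (hμ_nonneg j) (hsp j))
        (fun j => ?_) hsum_geo
      calc μ j * s ^ j ≤ 1 * s ^ j := mul_le_mul_of_nonneg_right (hμ_le_one j) (hsp j)
        _ = s ^ j := one_mul _
    have hsum_μbar : Summable (fun x => μbar x * s ^ x) := by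
      apply Summable.of_nonneg_of_le (fun x => mul_nonneg (hμbar_nonneg x) (hsp x))
        (fun x => ?_) hsum_geo
      calc μbar x * s ^ x ≤ 1 * s ^ x := mul_le_mul_of_nonneg_right (hμbar_le_one x) (hsp x)
        _ = s ^ x := one_mul _
    -- finite identity
    have fin_id : ∀ n : ℕ, (1 - s) * ∑ x ∈ Finset.range (n+1), μbar x * s ^ x
        = 1 - (∑ x ∈ Finset.range (n+1), μ x * s ^ x) - μbar n * s ^ (n+1) := by
      intro n
      induction n with
      | zero =>
        rw [Finset.sum_range_one, Finset.sum_range_one, hμbar 0, Finset.sum_range_one]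
        ring
      | succ k ih =>
        rw [Finset.sum_range_succ, Finset.sum_range_succ (f := fun x => μ x * s ^ x),
          mul_add, ih, hμbar_succ k]
        ring
    -- limits
    set T : ℝ := ∑' x, μbar x * s ^ x with hT
    set F : ℝ := ∑' j, μ j * s ^ j with hF
    have hA : Tendsto (fun n => ∑ x ∈ Finset.range (n+1), μbar x * s ^ x) atTop (𝓝 T) :=
      (hsum_μbar.hasSum.tendsto_sum_nat).comp (tendsto_add_atTop_nat 1)
    have hB : Tendsto (fun n => ∑ x ∈ Finset.range (n+1), μ x * s ^ x) atTop (𝓝 F) :=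
      (hsum_μ.hasSum.tendsto_sum_nat).comp (tendsto_add_atTop_nat 1)
    have hC : Tendsto (fun n : ℕ => μbar n * s ^ (n+1)) atTop (𝓝 0) := by
      refine squeeze_zero (g := fun n : ℕ => s ^ (n+1))
        (fun n => mul_nonneg (hμbar_nonneg n) (hsp (n+1))) (fun n => ?_) ?_
      · calc μbar n * s ^ (n+1) ≤ 1 * s ^ (n+1) :=
            mul_le_mul_of_nonneg_right (hμbar_le_one n) (hsp (n+1))
          _ = s ^ (n+1) := one_mul _
      · exact (tendsto_pow_atTop_nhds_zero_of_lt_one hs0 hs1).comp (tendsto_add_atTop_nat 1)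
    have key1 : (1 - s) * T = 1 - F := by
      have hL : Tendsto (fun n => (1 - s) * ∑ x ∈ Finset.range (n+1), μbar x * s ^ x)
          atTop (𝓝 ((1 - s) * T)) := hA.const_mul _
      have hR : Tendsto (fun n => 1 - (∑ x ∈ Finset.range (n+1), μ x * s ^ x)
          - μbar n * s ^ (n+1)) atTop (𝓝 (1 - F - 0)) :=
        (tendsto_const_nhds.sub hB).sub hC
      rw [sub_zero] at hR
      exact tendsto_nhds_unique (hL.congr fin_id) hR
    -- the g function
    set g : ℕ → ℝ := fun x => (1 / μ 0) * (μbar x + p / α) * s ^ x with hg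
    have hg_eq : g = fun x => (1 / μ 0) * (μbar x * s ^ x) + (p / α / μ 0) * s ^ x := by
      funext x; show (1 / μ 0) * (μbar x + p / α) * s ^ x = _; ring
    have hsum_g : Summable g := by
      rw [hg_eq]
      exact (hsum_μbar.mul_left _).add (hsum_geo.mul_left _)
    have htsum_g : ∑' x, g x = (1 / μ 0) * T + (p / α / μ 0) * (1 - s)⁻¹ := by
      rw [hg_eq, Summable.tsum_add (hsum_μbar.mul_left _) (hsum_geo.mul_left _),
        tsum_mul_left, tsum_mul_left, tsum_geometric_of_lt_one hs0 hs1]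
    have htail : (fun x : ℕ => η (x+1) * s ^ (x+1)) = fun x => g (x+1) := by
      funext x
      rw [hη (x+1) (Nat.le_add_left 1 x)]
    have hsum_η : Summable (fun x => η x * s ^ x) := by
      apply (summable_nat_add_iff 1).mp
      rw [htail]
      exact (summable_nat_add_iff 1).mpr hsum_g
    have hηg : ∑' x, η x * s ^ x = ∑' x, g x - g 0 := by
      rw [Summable.tsum_eq_zero_add hsum_η, Summable.tsum_eq_zero_add hsum_g, htail, hη0]
      ring
    have hμbar0 : μbar 0 = 1 - μ 0 := by rw [hμbar 0, Finset.sum_range_one]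
    have hg0 : g 0 = (1 / μ 0) * ((1 - μ 0) + p / α) := by
      show (1 / μ 0) * (μbar 0 + p / α) * s ^ 0 = _
      rw [hμbar0, pow_zero, mul_one]
    have h1s : (1:ℝ) - s ≠ 0 := by linarith
    have hTval : T = (1 - F) / (1 - s) := by
      rw [eq_div_iff h1s, mul_comm]
      exact key1
    rw [hηg, htsum_g, hg0, hTval, hψ s, ← hF]
    field_simp
    ring
  constructor
  · intro s hs
    exact main s hs.1 hs.2
  · intro s hs
    have hs1 : s < 1 := lt_of_lt_of_le hs.2 hs₀_mem.2
    rw [main s hs.1 hs1]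
    have hψs : 0 < ψ s := hψ_pos s hs
    have hden : 0 < α * μ 0 * (1 - s) := by
      apply mul_pos (mul_pos hα hμ0)
      linarith
    have : 0 < ψ s / (α * μ 0 * (1 - s)) := div_pos hψs hden
    linarith
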